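/- The unit sphere S^{d−1} = {x ∈ ℝ^d : ‖x‖ = 1} cannot be covered by fewer than d closed Euclidean balls of radius r < 1. That is, if S^{d−1} ⊆ ∪_{i=1}^m B(c_i, r) with r < 1, then m ≥ d. -/

import Mathlib

theorem stmt_9 {d : ℕ} (hd : 1 ≤ d) (m : ℕ) (r : ℝ) (hr : r < 1)
    (c : Fin m → EuclideanSpace ℝ (Fin d))
    (hcover : Metric.sphere (0 : EuclideanSpace ℝ (Fin d)) 1 ⊆
      ⋃ i : Fin m, Metric.closedBall (c i) r) :
    d ≤ m := by
  by_contra h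
  push_neg at h
  set V := Submodule.span ℝ (Set.range c) with hV
  have hfr : Module.finrank ℝ V ≤ m := by
    simpa [Set.finrank] using finrank_range_le_card (R := ℝ) c
  have hdim : Module.finrank ℝ (EuclideanSpace ℝ (Fin d)) = d := by
    simp [finrank_euclideanSpace]
  have hVne : Vᗮ ≠ ⊥ := by
    intro hbot
    have := Submodule.finrank_add_finrank_orthogonal (K := V)
    rw [hbot] at this
    simp [hdim] at this
    omega
  obtain ⟨v, hvV, hv0⟩ := Submodule.exists_mem_ne_zero_of_ne_bot hVne
  set x : EuclideanSpace ℝ (Fin d) := ‖v‖⁻¹ • v with hx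
  have hnv : ‖v‖ ≠ 0 := norm_ne_zero_iff.mpr hv0
  have hxnorm : ‖x‖ = 1 := by
    rw [hx, norm_smul, norm_inv, norm_norm, inv_mul_cancel₀ hnv]
  have hxs : x ∈ Metric.sphere (0 : EuclideanSpace ℝ (Fin d)) 1 := by
    simp [hxnorm]
  obtain ⟨_, ⟨i, rfl⟩, hxi⟩ := hcover hxs
  have hci : (c i) ∈ V := Submodule.subset_span ⟨i, rfl⟩
  have horth : inner ℝ (c i) x = (0 : ℝ) := by
    rw [hx, inner_smul_right]
    have := (Submodule.mem_orthogonal V v).mp hvV (c i) hci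
    rw [this, mul_zero]
  have hd2 : dist x (c i) ^ 2 = 1 + ‖c i‖ ^ 2 := by
    rw [dist_eq_norm, norm_sub_sq_real, real_inner_comm, horth, hxnorm]
    ring
  have h1 : (1 : ℝ) ≤ dist x (c i) := by
    nlinarith [dist_nonneg (x := x) (y := c i), sq_nonneg ‖c i‖]
  have := Metric.mem_closedBall.mp hxi
  linarith
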